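/- Let G be a connected finite graph (multiple edges allowed, no loops) that is not a regular bipartite graph, let w be a vertex of G, and let λ ∈ {0,1}. Then G has a spanning weakly even (w,λ)-tree, i.e., a spanning tree T such that in the bipartition of T in which w lies in the part of type λ, every leaf of T whose degree in G equals the maximum degree Δ(G) lies in the type-0 part. -/

import Mathlib

/-- A multigraph on vertex type `V` with edge type `E`: each edge is assigned an
unordered pair of distinct endpoints (multiple edges allowed, no loops). -/
structure Multigraph (V : Type) (E : Type) where
  inc : E → Sym2 V
  loopless : ∀ e : E, ¬ (inc e).IsDiag

namespace Multigraph

variable {V E : Type}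

/-- `u` and `v` are joined by an edge belonging to the edge set `S`. -/
def AdjOn (G : Multigraph V E) (S : Set E) (u v : V) : Prop :=
  ∃ e ∈ S, G.inc e = s(u, v)

/-- `v` is reachable from `u` using edges in `S`. -/
def ReachOn (G : Multigraph V E) (S : Set E) (u v : V) : Prop :=
  Relation.ReflTransGen (G.AdjOn S) u v

/-- `G` is connected. -/
def Connected (G : Multigraph V E) : Prop :=
  Nonempty V ∧ ∀ u v : V, G.ReachOn Set.univ u v

/-- The degree of `v` in the spanning subgraph with edge set `S`. -/
noncomputable def degOn (G : Multigraph V E) (S : Set E) (v : V) : ℕ :=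
  {e ∈ S | v ∈ G.inc e}.ncard

/-- The degree of `v` in `G`. -/
noncomputable def degree (G : Multigraph V E) (v : V) : ℕ :=
  G.degOn Set.univ v

/-- The maximum degree `Δ(G)`. -/
noncomputable def maxDegree (G : Multigraph V E) [Fintype V] : ℕ :=
  Finset.univ.sup G.degree

/-- `G` is regular. -/
def IsRegular (G : Multigraph V E) : Prop :=
  ∃ r : ℕ, ∀ v : V, G.degree v = r

/-- The 2-colouring `c` is proper on the edge set `S`: the two endpoints of any
edge of `S` receive different colours. -/
def ProperOn (G : Multigraph V E) (S : Set E) (c : V → Bool) : Prop :=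
  ∀ e ∈ S, ∀ u v : V, G.inc e = s(u, v) → c u ≠ c v

/-- `G` is bipartite. -/
def IsBipartite (G : Multigraph V E) : Prop :=
  ∃ c : V → Bool, G.ProperOn Set.univ c

/-- The sub-multigraph of `G` with vertex set `U` and edge set `S` is a tree:
`U` is nonempty, every edge of `S` joins vertices of `U`, any two vertices of `U`
are joined by a walk using edges of `S`, and there are exactly `|U| - 1` edges
(which forces acyclicity, and in particular forbids parallel edges in `S`). -/
structure IsTree (G : Multigraph V E) (U : Set V) (S : Set E) : Prop where
  nonempty : U.Nonempty
  edges_in : ∀ e ∈ S, ∀ v : V, v ∈ G.inc e → v ∈ U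
  conn : ∀ u ∈ U, ∀ v ∈ U, G.ReachOn S u v
  card_eq : S.ncard + 1 = U.ncard

/-- `v` is a leaf of the subgraph with edge set `S`. -/
def IsLeaf (G : Multigraph V E) (S : Set E) (v : V) : Prop :=
  G.degOn S v = 1

/-- `e` is a cutedge: after removing `e`, some pair of vertices is separated. -/
def IsCutedge (G : Multigraph V E) (e : E) : Prop :=
  ∃ u v : V, ¬ G.ReachOn {e}ᶜ u v

/-- `G` is 2-edge-connected: connected and without cutedges. -/
def TwoEdgeConnected (G : Multigraph V E) : Prop :=
  G.Connected ∧ ∀ e : E, ¬ G.IsCutedge e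

/-- The edge set `S` is a weak 2-factor of `G`: every vertex has degree at most
2 in `S` (equivalently, every component of the spanning subgraph is a path —
possibly a single vertex — or a cycle), and every vertex of degree less than 2
in `S` (i.e. every endvertex of a path component) has degree less than `Δ(G)`
in `G`. -/
def IsWeakTwoFactor (G : Multigraph V E) [Fintype V] (S : Set E) : Prop :=
  ∀ v : V, G.degOn S v ≤ 2 ∧ (G.degOn S v < 2 → G.degree v < G.maxDegree)

end Multigraph

namespace Multigraph

open Classical Set

variable {V E : Type} (G : Multigraph V E)

lemma exists_endpoints (e : E) : ∃ u v : V, u ≠ v ∧ G.inc e = s(u, v) := by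
  obtain ⟨⟨u, v⟩, h⟩ := Quot.exists_rep (G.inc e)
  refine ⟨u, v, ?_, h.symm⟩
  intro huv
  exact G.loopless e (by rw [← h, huv]; exact Sym2.mk_isDiag_iff.mpr rfl)

variable {G}

lemma adjOn_symm {S : Set E} {u v : V} (h : G.AdjOn S u v) : G.AdjOn S v u := by
  obtain ⟨e, he, h⟩ := h
  exact ⟨e, he, by rw [h, Sym2.eq_swap]⟩

lemma reachOn_refl {S : Set E} (v : V) : G.ReachOn S v v := Relation.ReflTransGen.refl

lemma reachOn_symm {S : Set E} {u v : V} (h : G.ReachOn S u v) : G.ReachOn S v u :=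
  by
    induction h with
    | refl => exact Relation.ReflTransGen.refl
    | tail _ hab ih => exact Relation.ReflTransGen.head (adjOn_symm hab) ih

lemma reachOn_trans {S : Set E} {u v x : V} (h : G.ReachOn S u v) (h' : G.ReachOn S v x) :
    G.ReachOn S u x := Relation.ReflTransGen.trans h h'

lemma adjOn_mono {S T : Set E} (hST : S ⊆ T) {u v : V} (h : G.AdjOn S u v) : G.AdjOn T u v := by
  obtain ⟨e, he, h⟩ := h; exact ⟨e, hST he, h⟩

lemma reachOn_mono {S T : Set E} (hST : S ⊆ T) {u v : V} (h : G.ReachOn S u v) :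
    G.ReachOn T u v := Relation.ReflTransGen.mono (fun _ _ => adjOn_mono hST) _ _ h

lemma adjOn_of_edge {S : Set E} {e : E} {u v : V} (he : e ∈ S) (h : G.inc e = s(u,v)) :
    G.ReachOn S u v := Relation.ReflTransGen.single ⟨e, he, h⟩

/-- crossing lemma for vertex sets -/
lemma exists_crossing {S : Set E} {U : Set V} {u x : V} (hu : u ∈ U) (hx : x ∉ U)
    (h : G.ReachOn S u x) : ∃ e ∈ S, ∃ a b : V, G.inc e = s(a,b) ∧ a ∈ U ∧ b ∉ U := by
  induction h with
  | refl => exact absurd hu hx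
  | @tail y z hyz hadj ih =>
    by_cases hy : y ∈ U
    · obtain ⟨e, he, hinc⟩ := hadj
      exact ⟨e, he, y, z, hinc, hy, hx⟩
    · exact ih hy

lemma mem_inc_iff {e : E} {u v x : V} (h : G.inc e = s(u,v)) :
    x ∈ G.inc e ↔ x = u ∨ x = v := by rw [h, Sym2.mem_iff]

/-- decomposition of reachability over `S ∪ {e}` -/
lemma reach_union_single {S : Set E} {e : E} {a b : V} (hinc : G.inc e = s(a,b)) {x y : V}
    (h : G.ReachOn (S ∪ {e}) x y) :
    G.ReachOn S x y ∨ (G.ReachOn S x a ∧ G.ReachOn S b y) ∨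
      (G.ReachOn S x b ∧ G.ReachOn S a y) := by
  induction h with
  | refl => exact Or.inl (reachOn_refl x)
  | @tail p q hxp hadj ih =>
    obtain ⟨g, hg, hginc⟩ := hadj
    rcases hg with hgS | hge
    · have step : G.ReachOn S p q := adjOn_of_edge hgS hginc
      rcases ih with h1 | ⟨h2a, h2b⟩ | ⟨h3a, h3b⟩
      · exact Or.inl (reachOn_trans h1 step)
      · exact Or.inr (Or.inl ⟨h2a, reachOn_trans h2b step⟩)
      · exact Or.inr (Or.inr ⟨h3a, reachOn_trans h3b step⟩)
    · have hg' : g = e := hge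
      rw [hg', hinc] at hginc
      have hpq : (a = p ∧ b = q) ∨ (a = q ∧ b = p) := Sym2.eq_iff.mp hginc
      rcases hpq with ⟨rfl, rfl⟩ | ⟨rfl, rfl⟩
      · -- p = a, q = b : reached a, now step to b
        rcases ih with h1 | ⟨h2a, h2b⟩ | ⟨h3a, h3b⟩
        · exact Or.inr (Or.inl ⟨h1, reachOn_refl _⟩)
        · exact Or.inr (Or.inl ⟨h2a, reachOn_refl _⟩)
        · exact Or.inl h3a
      · -- p = b, q = a
        rcases ih with h1 | ⟨h2a, h2b⟩ | ⟨h3a, h3b⟩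
        · exact Or.inr (Or.inr ⟨h1, reachOn_refl _⟩)
        · exact Or.inl h2a
        · exact Or.inr (Or.inr ⟨h3a, reachOn_refl _⟩)

/-- if the endpoints of `e` are already connected in `S`, adding `e` changes nothing -/
lemma reach_union_single_of_reach {S : Set E} {e : E} {a b : V} (hinc : G.inc e = s(a,b))
    (hab : G.ReachOn S a b) {x y : V} (h : G.ReachOn (S ∪ {e}) x y) : G.ReachOn S x y := by
  rcases reach_union_single hinc h with h1 | ⟨h2a, h2b⟩ | ⟨h3a, h3b⟩
  · exact h1
  · exact reachOn_trans (reachOn_trans h2a hab) h2b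
  · exact reachOn_trans (reachOn_trans h3a (reachOn_symm hab)) h3b


set_option linter.unusedSectionVars false

section Comps
variable [Fintype V]

/-- the reachability class of `v` -/
def cl (G : Multigraph V E) (S : Set E) (v : V) : Set V := {u | G.ReachOn S v u}

/-- number of connected components of the spanning subgraph with edge set `S` -/
noncomputable def comps (G : Multigraph V E) (S : Set E) : ℕ := (Set.range (G.cl S)).ncard

lemma mem_cl_self {S : Set E} (v : V) : v ∈ G.cl S v := reachOn_refl v

lemma cl_eq_of_reach {S : Set E} {u v : V} (h : G.ReachOn S u v) : G.cl S u = G.cl S v := by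
  ext x
  exact ⟨fun hx => reachOn_trans (reachOn_symm h) hx, fun hx => reachOn_trans h hx⟩

lemma reach_of_cl_eq {S : Set E} {u v : V} (h : G.cl S u = G.cl S v) : G.ReachOn S u v := by
  have : v ∈ G.cl S u := h ▸ mem_cl_self v
  exact this

lemma cl_empty (v : V) : G.cl (∅ : Set E) v = {v} := by
  ext u
  simp only [Set.mem_singleton_iff]
  constructor
  · intro h
    induction h with
    | refl => rfl
    | @tail p q hxp hadj ih => obtain ⟨e, he, -⟩ := hadj; exact absurd he (Set.notMem_empty e)
  · rintro rfl; exact mem_cl_self u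

lemma comps_empty : G.comps (∅ : Set E) = Nat.card V := by
  unfold comps
  have h : Set.range (G.cl (∅ : Set E)) = (fun v : V => ({v} : Set V)) '' Set.univ := by
    ext A
    constructor
    · rintro ⟨v, rfl⟩; exact ⟨v, trivial, (cl_empty v).symm⟩
    · rintro ⟨v, -, rfl⟩; exact ⟨v, cl_empty v⟩
  rw [h, Set.ncard_image_of_injective _ (fun a b hab => Set.singleton_injective hab),
    Set.ncard_univ]

lemma comps_spanning [Nonempty V] {S : Set E} (h : ∀ u v : V, G.ReachOn S u v) :
    G.comps S = 1 := by
  unfold comps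
  have hcl : ∀ v : V, G.cl S v = Set.univ := by
    intro v; ext u; simp only [Set.mem_univ, iff_true]; exact h v u
  have hrange : Set.range (G.cl S) = {Set.univ} := by
    ext A
    simp only [Set.mem_range, Set.mem_singleton_iff]
    constructor
    · rintro ⟨v, rfl⟩; exact hcl v
    · rintro rfl
      obtain ⟨v⟩ := ‹Nonempty V›
      exact ⟨v, hcl v⟩
  rw [hrange]; exact Set.ncard_singleton _

lemma comps_le_comps {S T : Set E} (h : S ⊆ T) : G.comps T ≤ G.comps S := by
  unfold comps
  have himg : Set.range (G.cl T) = (fun A : Set V => ⋃ x ∈ A, G.cl T x) '' Set.range (G.cl S) := by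
    have key : ∀ v : V, (⋃ x ∈ G.cl S v, G.cl T x) = G.cl T v := by
      intro v
      ext u
      simp only [Set.mem_iUnion]
      constructor
      · rintro ⟨x, hx, hu⟩
        exact reachOn_trans (reachOn_mono h hx) hu
      · intro hu; exact ⟨v, mem_cl_self v, hu⟩
    ext A
    constructor
    · rintro ⟨v, rfl⟩; exact ⟨G.cl S v, ⟨v, rfl⟩, key v⟩
    · rintro ⟨B, ⟨v, rfl⟩, rfl⟩; exact ⟨v, (key v).symm⟩
  rw [himg]
  exact Set.ncard_image_le (Set.toFinite _)

lemma comps_union_single_of_reach {S : Set E} {e : E} {a b : V} (hinc : G.inc e = s(a,b))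
    (hab : G.ReachOn S a b) : G.comps (S ∪ {e}) = G.comps S := by
  unfold comps
  have : G.cl (S ∪ {e}) = G.cl S := by
    funext v
    ext u
    exact ⟨fun h => reach_union_single_of_reach hinc hab h,
      fun h => reachOn_mono Set.subset_union_left h⟩
  rw [this]

lemma comps_union_single {S : Set E} {e : E} {a b : V} (hinc : G.inc e = s(a,b))
    (hnr : ¬ G.ReachOn S a b) : G.comps (S ∪ {e}) + 1 = G.comps S := by
  classical
  set S' := S ∪ {e} with hS'
  have hmem : e ∈ S' := Set.mem_union_right _ rfl
  have hreach' : G.ReachOn S' a b := adjOn_of_edge hmem hinc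
  -- claim 1
  have claim1 : ∀ v : V, ¬ G.ReachOn S v a → ¬ G.ReachOn S v b → G.cl S' v = G.cl S v := by
    intro v hva hvb
    ext u
    constructor
    · intro h
      rcases reach_union_single hinc h with h1 | ⟨h2a, _⟩ | ⟨h3a, _⟩
      · exact h1
      · exact absurd h2a hva
      · exact absurd h3a hvb
    · exact fun h => reachOn_mono Set.subset_union_left h
  have claim2 : G.cl S' a = G.cl S a ∪ G.cl S b := by
    ext u
    constructor
    · intro h
      rcases reach_union_single hinc h with h1 | ⟨_, h2b⟩ | ⟨h3a, _⟩
      · exact Or.inl h1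
      · exact Or.inr h2b
      · exact absurd h3a hnr
    · rintro (h | h)
      · exact reachOn_mono Set.subset_union_left h
      · exact reachOn_trans hreach' (reachOn_mono Set.subset_union_left h)
  have hclne : G.cl S a ≠ G.cl S b := fun h => hnr (reach_of_cl_eq h)
  set R := Set.range (G.cl S) with hR
  set P : Set (Set V) := {G.cl S a, G.cl S b} with hP
  have hPsub : P ⊆ R := by
    rintro A (rfl | rfl)
    exacts [⟨a, rfl⟩, ⟨b, rfl⟩]
  have hUnotin : (G.cl S a ∪ G.cl S b) ∉ R := by
    rintro ⟨v, hv⟩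
    have hva : G.ReachOn S v a := (hv.symm ▸ (Or.inl (mem_cl_self a)) : a ∈ G.cl S v)
    have hvb : G.ReachOn S v b := (hv.symm ▸ (Or.inr (mem_cl_self b)) : b ∈ G.cl S v)
    exact hnr (reachOn_trans (reachOn_symm hva) hvb)
  have hrange' : Set.range (G.cl S') = insert (G.cl S a ∪ G.cl S b) (R \ P) := by
    ext A
    constructor
    · rintro ⟨v, rfl⟩
      by_cases hva : G.ReachOn S v a
      · left
        rw [← claim2]
        exact cl_eq_of_reach (reachOn_trans (reachOn_mono Set.subset_union_left hva) (reachOn_refl a))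
      · by_cases hvb : G.ReachOn S v b
        · left
          rw [← claim2]
          have : G.ReachOn S' v a :=
            reachOn_trans (reachOn_mono Set.subset_union_left hvb) (reachOn_symm hreach')
          exact cl_eq_of_reach this
        · right
          refine ⟨⟨v, (claim1 v hva hvb).symm⟩, ?_⟩
          rintro (h | h)
          · exact hva (reach_of_cl_eq ((claim1 v hva hvb).symm ▸ h))
          · exact hvb (reach_of_cl_eq ((claim1 v hva hvb).symm ▸ h))
    · rintro (rfl | ⟨⟨v, rfl⟩, hvP⟩)
      · exact ⟨a, claim2⟩
      · have hva : ¬ G.ReachOn S v a := fun h => hvP (Or.inl (cl_eq_of_reach h))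
        have hvb : ¬ G.ReachOn S v b := fun h => hvP (Or.inr (cl_eq_of_reach h))
        exact ⟨v, claim1 v hva hvb⟩
  have hfinR : R.Finite := Set.toFinite _
  have hnotinDiff : (G.cl S a ∪ G.cl S b) ∉ R \ P := fun h => hUnotin h.1
  have h1 : (Set.range (G.cl S')).ncard = (R \ P).ncard + 1 := by
    rw [hrange', Set.ncard_insert_of_notMem hnotinDiff (hfinR.diff (t := P))]
  have h2 : (R \ P).ncard + P.ncard = R.ncard := by
    rw [Set.ncard_diff hPsub]
    have := Set.ncard_le_ncard hPsub hfinR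
    omega
  have h3 : P.ncard = 2 := Set.ncard_pair hclne
  unfold comps
  rw [← hR]
  omega

end Comps

section Indep
variable [Fintype V] [Fintype E]

/-- the endpoints of `e` are connected using edges in `S` -/
def Spanned (G : Multigraph V E) (S : Set E) (e : E) : Prop :=
  ∃ a b : V, G.inc e = s(a,b) ∧ G.ReachOn S a b

lemma spanned_iff {S : Set E} {e : E} {a b : V} (hinc : G.inc e = s(a,b)) :
    G.Spanned S e ↔ G.ReachOn S a b := by
  constructor
  · rintro ⟨p, q, hpq, h⟩
    rw [hinc] at hpq
    rcases Sym2.eq_iff.mp hpq with ⟨rfl, rfl⟩ | ⟨rfl, rfl⟩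
    · exact h
    · exact reachOn_symm h
  · intro h; exact ⟨a, b, hinc, h⟩

lemma spanned_mono {S T : Set E} (h : S ⊆ T) {e : E} (hs : G.Spanned S e) : G.Spanned T e := by
  obtain ⟨a, b, hinc, hr⟩ := hs; exact ⟨a, b, hinc, reachOn_mono h hr⟩

lemma spanned_of_mem {S : Set E} {e : E} (he : e ∈ S) : G.Spanned S e := by
  obtain ⟨a, b, -, hinc⟩ := exists_endpoints G e
  exact ⟨a, b, hinc, adjOn_of_edge he hinc⟩

lemma comps_union_spanned {S : Set E} {e : E} (h : G.Spanned S e) :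
    G.comps (S ∪ {e}) = G.comps S := by
  obtain ⟨a, b, hinc, hr⟩ := h
  exact comps_union_single_of_reach hinc hr

lemma comps_union_not_spanned {S : Set E} {e : E} (h : ¬ G.Spanned S e) :
    G.comps (S ∪ {e}) + 1 = G.comps S := by
  obtain ⟨a, b, -, hinc⟩ := exists_endpoints G e
  exact comps_union_single hinc (fun hr => h ((spanned_iff hinc).mpr hr))

lemma comps_step_mono {X Z : Set E} (hZX : Z ⊆ X) (e : E) :
    G.comps X + G.comps (Z ∪ {e}) ≤ G.comps Z + G.comps (X ∪ {e}) := by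
  by_cases hz : G.Spanned Z e
  · rw [comps_union_spanned hz, comps_union_spanned (spanned_mono hZX hz)]
    omega
  · have h1 := comps_union_not_spanned (G := G) hz
    by_cases hx : G.Spanned X e
    · rw [comps_union_spanned hx]
      omega
    · have h2 := comps_union_not_spanned (G := G) hx
      omega

lemma comps_supermod (F : Set E) : ∀ X Z : Set E, Z ⊆ X →
    G.comps X + G.comps (Z ∪ F) ≤ G.comps Z + G.comps (X ∪ F) := by
  refine Set.Finite.induction_on F (Set.toFinite F) ?_ ?_
  · intro X Z _; simp only [Set.union_empty]; omega
  · intro e F' hnotin hfin ih X Z hZX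
    have hrw : ∀ Y : Set E, Y ∪ insert e F' = (Y ∪ {e}) ∪ F' := by
      intro Y
      rw [Set.insert_eq, Set.union_assoc]
    rw [hrw X, hrw Z]
    have hIH := ih (X ∪ {e}) (Z ∪ {e}) (Set.union_subset_union_left _ hZX)
    have hstep := comps_step_mono (G := G) hZX e
    omega

/-- `S` is a forest -/
def Indep (G : Multigraph V E) (S : Set E) : Prop :=
  S.ncard + G.comps S = Nat.card V

lemma indep_empty : G.Indep (∅ : Set E) := by
  simp [Indep, comps_empty]

lemma indep_union_single {S : Set E} {e : E} (h : G.Indep S) (hns : ¬ G.Spanned S e) :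
    G.Indep (S ∪ {e}) := by
  have hne : e ∉ S := fun hmem => hns (spanned_of_mem hmem)
  have hcard : (S ∪ {e}).ncard = S.ncard + 1 := by
    rw [Set.union_singleton, Set.ncard_insert_of_notMem hne (Set.toFinite S)]
  have := comps_union_not_spanned (G := G) hns
  unfold Indep at *
  omega

lemma comps_pos [Nonempty V] (S : Set E) : 0 < G.comps S := by
  have : (Set.range (G.cl S)).Nonempty := by
    obtain ⟨v⟩ := ‹Nonempty V›; exact ⟨G.cl S v, v, rfl⟩
  have hfin : (Set.range (G.cl S)).Finite := Set.toFinite _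
  exact (Set.ncard_pos hfin).mpr this

lemma exists_spanning_extension [Nonempty V] {Om : Set E}
    (hcon : ∀ u v : V, G.ReachOn Om u v) :
    ∀ k : ℕ, ∀ F : Set E, G.comps F ≤ k → F ⊆ Om → G.Indep F →
    ∃ T : Set E, F ⊆ T ∧ T ⊆ Om ∧ G.Indep T ∧ ∀ u v : V, G.ReachOn T u v := by
  intro k
  induction k with
  | zero => intro F hk _ _; exact absurd hk (by have := comps_pos (G := G) F; omega)
  | succ k ih =>
    intro F hk hFOm hind
    by_cases htot : ∀ u v : V, G.ReachOn F u v
    · exact ⟨F, le_refl F, hFOm, hind, htot⟩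
    · push_neg at htot
      obtain ⟨u, v, huv⟩ := htot
      obtain ⟨e, heOm, a, b, hinc, ha, hb⟩ :=
        exists_crossing (mem_cl_self (G := G) (S := F) u) huv (hcon u v)
      have hnr : ¬ G.ReachOn F a b := fun h => hb (reachOn_trans ha h)
      have hns : ¬ G.Spanned F e := fun h => hnr ((spanned_iff hinc).mp h)
      have hdec := comps_union_not_spanned (G := G) hns
      obtain ⟨T, h1, h2, h3, h4⟩ := ih (F ∪ {e}) (by omega)
        (Set.union_subset hFOm (by simpa using heOm)) (indep_union_single hind hns)
      exact ⟨T, Set.subset_union_left.trans h1, h2, h3, h4⟩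

end Indep

section Coloring
variable [Fintype V]

/-- the set of bichromatic edges under `c` -/
def Om (G : Multigraph V E) (c : V → Bool) : Set E :=
  {e | ∀ u v : V, G.inc e = s(u,v) → c u ≠ c v}

/-- bichromatic edges with both endpoints in `U` -/
def OmU (G : Multigraph V E) (U : Set V) (c : V → Bool) : Set E :=
  {e | ∃ u v : V, G.inc e = s(u,v) ∧ u ∈ U ∧ v ∈ U ∧ c u ≠ c v}

lemma OmU_univ_subset_Om {c : V → Bool} : G.OmU Set.univ c ⊆ G.Om c := by
  rintro e ⟨u, v, hinc, -, -, hne⟩ p q hpq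
  rw [hinc] at hpq
  rcases Sym2.eq_iff.mp hpq with ⟨rfl, rfl⟩ | ⟨rfl, rfl⟩
  · exact hne
  · exact fun h => hne h.symm

lemma mem_Om_of_ends {c : V → Bool} {e : E} {u v : V} (hinc : G.inc e = s(u,v))
    (hne : c u ≠ c v) : e ∈ G.Om c := by
  intro p q hpq
  rw [hinc] at hpq
  rcases Sym2.eq_iff.mp hpq with ⟨rfl, rfl⟩ | ⟨rfl, rfl⟩
  · exact hne
  · exact fun h => hne h.symm

lemma coloring_aux (hconn : G.Connected) (w : V) (lam : Bool) :
    ∀ k : ℕ, ∀ (U : Set V) (c : V → Bool), (Set.univ \ U).ncard ≤ k →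
      w ∈ U → c w = lam →
      (∀ e : E, ∀ u v : V, G.inc e = s(u,v) → u ∈ U → v ∈ U →
        ¬(c u = true ∧ c v = true)) →
      (∀ v ∈ U, G.ReachOn (G.OmU U c) v w) →
      ∃ c' : V → Bool, c' w = lam ∧
        (∀ e : E, ∀ u v : V, G.inc e = s(u,v) → ¬(c' u = true ∧ c' v = true)) ∧
        (∀ v : V, G.ReachOn (G.Om c') v w) := by
  have finish : ∀ (c : V → Bool), c w = lam →
      (∀ e : E, ∀ u v : V, G.inc e = s(u,v) → u ∈ (Set.univ : Set V) →
        v ∈ Set.univ → ¬(c u = true ∧ c v = true)) →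
      (∀ v ∈ (Set.univ : Set V), G.ReachOn (G.OmU Set.univ c) v w) →
      ∃ c' : V → Bool, c' w = lam ∧
        (∀ e : E, ∀ u v : V, G.inc e = s(u,v) → ¬(c' u = true ∧ c' v = true)) ∧
        (∀ v : V, G.ReachOn (G.Om c') v w) := by
    intro c hw hind hreach
    exact ⟨c, hw, fun e u v hinc => hind e u v hinc trivial trivial,
      fun v => reachOn_mono (OmU_univ_subset_Om (G := G)) (hreach v trivial)⟩
  intro k
  induction k with
  | zero =>
    intro U c hcard hwU hcw hind hreach
    have hU : U = Set.univ := by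
      have h0 : (Set.univ \ U).ncard = 0 := Nat.le_zero.mp hcard
      have : Set.univ \ U = ∅ := by
        by_contra hne
        obtain ⟨x, hx⟩ := Set.nonempty_iff_ne_empty.mpr hne
        have := (Set.ncard_pos (Set.toFinite _)).mpr ⟨x, hx⟩
        omega
      have := Set.diff_eq_empty.mp this
      exact Set.eq_univ_of_univ_subset this
    subst hU
    exact finish c hcw hind hreach
  | succ k ih =>
    intro U c hcard hwU hcw hind hreach
    by_cases hU : U = Set.univ
    · subst hU; exact finish c hcw hind hreach
    · have hx0 : ∃ x : V, x ∉ U := by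
        by_contra h
        push_neg at h
        exact hU (Set.eq_univ_of_forall h)
      obtain ⟨x0, hx0⟩ := hx0
      obtain ⟨e0, -, a, b, hinc0, haU, hbU⟩ :=
        exists_crossing hwU hx0 (hconn.2 w x0)
      -- greedy colour for b
      set P : Prop := ∃ (e' : E) (u' : V), G.inc e' = s(b, u') ∧ u' ∈ U ∧ c u' = true with hP
      set gv : Bool := if P then false else true with hgv
      set c' : V → Bool := Function.update c b gv with hc'
      have hcb : ∀ u : V, u ≠ b → c' u = c u := fun u hu => Function.update_of_ne hu _ _
      have hc'b : c' b = gv := Function.update_self _ _ _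
      set U' : Set V := insert b U with hU'
      have hwb : w ≠ b := fun h => hbU (h ▸ hwU)
      -- invariant: no true-true edge within U'
      have hind' : ∀ e : E, ∀ u v : V, G.inc e = s(u,v) → u ∈ U' → v ∈ U' →
          ¬(c' u = true ∧ c' v = true) := by
        intro e u v hinc hu hv hcontra
        rcases Set.mem_insert_iff.mp hu with hub | huU
        · rcases Set.mem_insert_iff.mp hv with hvb | hvU
          · rw [hub, hvb] at hinc
            exact G.loopless e (by rw [hinc]; exact Sym2.mk_isDiag_iff.mpr rfl)
          · -- u = b, v ∈ U
            have hvb : v ≠ b := fun h => hbU (h ▸ hvU)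
            have hPP : P := ⟨e, v, by rw [← hub]; exact hinc, hvU,
              by rw [← hcb v hvb]; exact hcontra.2⟩
            have : c' u = false := by rw [hub, hc'b, hgv, if_pos hPP]
            rw [this] at hcontra; exact absurd hcontra.1 (by simp)
        · rcases Set.mem_insert_iff.mp hv with hvb | hvU
          · -- v = b, u ∈ U
            have hub : u ≠ b := fun h => hbU (h ▸ huU)
            have hPP : P := ⟨e, u, by rw [← hvb, hinc, Sym2.eq_swap], huU,
              by rw [← hcb u hub]; exact hcontra.1⟩
            have : c' v = false := by rw [hvb, hc'b, hgv, if_pos hPP]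
            rw [this] at hcontra; exact absurd hcontra.2 (by simp)
          · have hub : u ≠ b := fun h => hbU (h ▸ huU)
            have hvb : v ≠ b := fun h => hbU (h ▸ hvU)
            rw [hcb u hub, hcb v hvb] at hcontra
            exact hind e u v hinc huU hvU hcontra
      -- monotonicity of the partial bichromatic edge set
      have hmono : G.OmU U c ⊆ G.OmU U' c' := by
        rintro e ⟨u, v, hinc, hu, hv, hne⟩
        have hub : u ≠ b := fun h => hbU (h ▸ hu)
        have hvb : v ≠ b := fun h => hbU (h ▸ hv)
        exact ⟨u, v, hinc, Set.mem_insert_of_mem _ hu, Set.mem_insert_of_mem _ hv,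
          by rw [hcb u hub, hcb v hvb]; exact hne⟩
      -- reach invariant
      have hreach' : ∀ v ∈ U', G.ReachOn (G.OmU U' c') v w := by
        intro v hv
        rcases Set.mem_insert_iff.mp hv with hvb | hvU
        · by_cases hPP : P
          · obtain ⟨e', u', hinc', hu'U, hcu'⟩ := id hPP
            have hub : u' ≠ b := fun h => hbU (h ▸ hu'U)
            have he' : e' ∈ G.OmU U' c' := by
              refine ⟨b, u', hinc', Set.mem_insert _ _, Set.mem_insert_of_mem _ hu'U, ?_⟩
              rw [hc'b, hgv, if_pos hPP, hcb u' hub, hcu']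
              simp
            refine reachOn_trans (adjOn_of_edge he' (by rw [← hvb] at hinc'; exact hinc'))
              (reachOn_mono hmono (hreach u' hu'U))
          · have hca : c a = false := by
              by_contra hca
              have : c a = true := by
                cases hcaeq : c a
                · exact absurd hcaeq hca
                · rfl
              exact hPP ⟨e0, a, by rw [hinc0, Sym2.eq_swap], haU, this⟩
            have hab : a ≠ b := fun h => hbU (h ▸ haU)
            have he0 : e0 ∈ G.OmU U' c' := by
              refine ⟨a, b, hinc0, Set.mem_insert_of_mem _ haU, Set.mem_insert _ _, ?_⟩
              rw [hc'b, hgv, if_neg hPP, hcb a hab, hca]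
              simp
            refine reachOn_trans
              (reachOn_symm (adjOn_of_edge he0 (by rw [← hvb] at hinc0; exact hinc0)))
              (reachOn_mono hmono (hreach a haU))
        · exact reachOn_mono hmono (hreach v hvU)
      -- cardinality decreases
      have hcard' : (Set.univ \ U').ncard ≤ k := by
        have hsub : Set.univ \ U' = (Set.univ \ U) \ {b} := by
          rw [hU', Set.diff_diff]
          congr 1
          rw [Set.union_comm, Set.insert_eq]
        have hbmem : b ∈ Set.univ \ U := ⟨trivial, hbU⟩
        have := Set.ncard_diff_singleton_lt_of_mem hbmem (Set.toFinite _)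
        rw [hsub]
        omega
      exact ih U' c' hcard' (Set.mem_insert_of_mem _ hwU)
        (by rw [hcb w hwb]; exact hcw) hind' hreach'

/-- the key colouring: anchored at `w`, independent true class, bichromatic subgraph connected -/
lemma exists_good_coloring (hconn : G.Connected) (w : V) (lam : Bool)
    (hne : ∃ v : V, v ≠ w) :
    ∃ c : V → Bool, c w = lam ∧
      (∀ e : E, ∀ u v : V, G.inc e = s(u,v) → ¬(c u = true ∧ c v = true)) ∧
      (∀ v : V, G.ReachOn (G.Om c) v w) := by
  classical
  obtain ⟨v0, hv0⟩ := hne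
  rcases Bool.eq_false_or_eq_true lam with hlam | hlam
  · -- lam = true : start with U = {w}, c w = true
    set c : V → Bool := Function.update (fun _ => false) w true with hc
    have hcw : c w = true := Function.update_self _ _ _
    refine coloring_aux hconn w lam ((Set.univ \ {w}).ncard) {w} c (le_refl _) rfl
      (by rw [hcw, hlam]) ?_ ?_
    · intro e u v hinc hu hv _
      have hu' : u = w := hu
      have hv' : v = w := hv
      rw [hu', hv'] at hinc
      exact G.loopless e (by rw [hinc]; exact Sym2.mk_isDiag_iff.mpr rfl)
    · intro v hv
      have hv' : v = w := hv
      rw [hv']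
      exact reachOn_refl w
  · -- lam = false : start with U = {w, u0} where u0 is a neighbour of w, coloured true
    obtain ⟨e0, -, a, b, hinc0, haU, hbU⟩ :=
      exists_crossing (Set.mem_singleton w) (fun h => hv0 h) (hconn.2 w v0)
    have haw : a = w := haU
    have hinc0' : G.inc e0 = s(w, b) := by rw [← haw]; exact hinc0
    have hwb : w ≠ b := fun h => hbU (Set.mem_singleton_iff.mpr h.symm)
    set c : V → Bool := Function.update (fun _ => false) b true with hc
    have hcb : c b = true := Function.update_self _ _ _
    have hcother : ∀ u : V, u ≠ b → c u = false := fun u hu => Function.update_of_ne hu _ _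
    refine coloring_aux hconn w lam ((Set.univ \ {w, b}).ncard)
      {w, b} c (le_refl _) (Set.mem_insert _ _) (by rw [hcother w hwb, hlam]) ?_ ?_
    · intro e u v hinc hu hv hcontra
      rcases Set.mem_insert_iff.mp hu with huw | hub
      · exact absurd hcontra.1 (by rw [huw, hcother w hwb]; simp)
      · rcases Set.mem_insert_iff.mp hv with hvw | hvb
        · exact absurd hcontra.2 (by rw [hvw, hcother w hwb]; simp)
        · have hub' : u = b := hub
          have hvb' : v = b := hvb
          rw [hub', hvb'] at hinc
          exact G.loopless e (by rw [hinc]; exact Sym2.mk_isDiag_iff.mpr rfl)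
    · intro v hv
      have he0 : e0 ∈ G.OmU {w, b} c := by
        refine ⟨w, b, hinc0', Set.mem_insert _ _, Set.mem_insert_of_mem _ rfl, ?_⟩
        rw [hcother w hwb, hcb]; simp
      rcases Set.mem_insert_iff.mp hv with hvw | hvb
      · rw [hvw]; exact reachOn_refl w
      · have hvb' : v = b := hvb
        rw [hvb']
        exact reachOn_symm (adjOn_of_edge he0 hinc0')

end Coloring

section Rado
variable [Fintype V] [Fintype E]

/-- edges of the bichromatic subgraph incident to `W` -/
def deltaW (G : Multigraph V E) (c : V → Bool) (W : Finset V) : Set E :=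
  {e | e ∈ G.Om c ∧ ∃ a ∈ W, a ∈ G.inc e}

lemma deltaW_empty (c : V → Bool) : G.deltaW c (∅ : Finset V) = ∅ := by
  ext e; simp [deltaW]

lemma deltaW_mono (c : V → Bool) {W W' : Finset V} (h : W ⊆ W') :
    G.deltaW c W ⊆ G.deltaW c W' := by
  rintro e ⟨hOm, a, haW, hainc⟩
  exact ⟨hOm, a, h haW, hainc⟩

lemma deltaW_union (c : V → Bool) (W₁ W₂ : Finset V) :
    G.deltaW c (W₁ ∪ W₂) = G.deltaW c W₁ ∪ G.deltaW c W₂ := by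
  ext e
  constructor
  · rintro ⟨hOm, a, haW, hainc⟩
    rcases Finset.mem_union.mp haW with h | h
    · exact Or.inl ⟨hOm, a, h, hainc⟩
    · exact Or.inr ⟨hOm, a, h, hainc⟩
  · rintro (⟨hOm, a, haW, hainc⟩ | ⟨hOm, a, haW, hainc⟩)
    · exact ⟨hOm, a, Finset.mem_union_left _ haW, hainc⟩
    · exact ⟨hOm, a, Finset.mem_union_right _ haW, hainc⟩

set_option maxHeartbeats 1000000 in
lemma rado (c : V → Bool) :
    ∀ (N : ℕ) (d : V → ℕ) (K : Set E), (∑ v : V, d v = N) → G.Indep K → K ⊆ G.Om c →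
    (∀ W : Finset V, (∀ b ∈ W, 0 < d b) → W.Nonempty →
      G.comps (G.deltaW c W ∪ K) + K.ncard + (∑ b ∈ W, d b) ≤ Nat.card V) →
    ∃ F : Set E, K ⊆ F ∧ F ⊆ G.Om c ∧ G.Indep F ∧
      ∀ v : V, d v ≤ {e ∈ F \ K | v ∈ G.inc e}.ncard := by
  intro N
  induction N with
  | zero =>
    intro d K hsum hK hKOm _
    refine ⟨K, le_refl K, hKOm, hK, fun v => ?_⟩
    have : d v = 0 := by
      have := Finset.sum_eq_zero_iff.mp hsum v (Finset.mem_univ v)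
      exact this
    omega
  | succ N ih =>
    intro d K hsum hK hKOm hH
    obtain ⟨a, -, hda0⟩ : ∃ a ∈ Finset.univ, d a ≠ 0 :=
      Finset.exists_ne_zero_of_sum_ne_zero (by rw [hsum]; omega)
    have hda : 0 < d a := Nat.pos_of_ne_zero hda0
    set n := Nat.card V with hn
    set Da : Set E := {e | e ∈ G.Om c ∧ a ∈ G.inc e} with hDa
    have hdelta_a : G.deltaW c {a} = Da := by
      ext e
      simp [deltaW, hDa]
    -- the "danger" predicate
    set Tight : Finset V → Prop :=
      fun W => G.comps (G.deltaW c W ∪ K) + K.ncard + (∑ b ∈ W, d b) = n with hTight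
    set TT : Finset V → Prop :=
      fun W => Tight W ∧ a ∉ W ∧ ∀ b ∈ W, 0 < d b with hTT
    have htight_empty : Tight ∅ := by
      rw [hTight]
      simp only [deltaW_empty, Set.empty_union, Finset.sum_empty, add_zero]
      have := hK
      unfold Indep at this
      omega
    by_cases hgood : ∃ e ∈ Da, ¬ ∃ W : Finset V, TT W ∧ G.Spanned (G.deltaW c W ∪ K) e
    · -- a good edge exists: commit it and recurse
      obtain ⟨e, heDa, hnd⟩ := hgood
      have hnsK : ¬ G.Spanned K e := by
        intro hsp
        exact hnd ⟨∅, ⟨htight_empty, Finset.notMem_empty a, fun b hb => absurd hb (Finset.notMem_empty b)⟩,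
          by rw [deltaW_empty, Set.empty_union]; exact hsp⟩
      have heK : e ∉ K := fun h => hnsK (spanned_of_mem h)
      have hKe : G.Indep (K ∪ {e}) := indep_union_single hK hnsK
      have hKeOm : K ∪ {e} ⊆ G.Om c :=
        Set.union_subset hKOm (by simpa using heDa.1)
      have hKecard : (K ∪ {e}).ncard = K.ncard + 1 := by
        rw [Set.union_singleton, Set.ncard_insert_of_notMem heK (Set.toFinite K)]
      set d' : V → ℕ := Function.update d a (d a - 1) with hd'
      have hd'a : d' a = d a - 1 := Function.update_self _ _ _
      have hd'ne : ∀ b : V, b ≠ a → d' b = d b := fun b hb => Function.update_of_ne hb _ _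
      have hsum' : ∑ v : V, d' v = N := by
        have h1 : ∑ v ∈ Finset.univ, d' v = (d a - 1) + ∑ v ∈ Finset.univ \ {a}, d v :=
          Finset.sum_update_of_mem (Finset.mem_univ a) d (d a - 1)
        have h2 : d a + ∑ v ∈ (Finset.univ : Finset V).erase a, d v = ∑ v ∈ Finset.univ, d v :=
          Finset.add_sum_erase _ _ (Finset.mem_univ a)
        rw [Finset.erase_eq] at h2
        omega
      have hH' : ∀ W : Finset V, (∀ b ∈ W, 0 < d' b) → W.Nonempty →
          G.comps (G.deltaW c W ∪ (K ∪ {e})) + (K ∪ {e}).ncard + (∑ b ∈ W, d' b) ≤ n := by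
        intro W hsupp hWne
        by_cases haW : a ∈ W
        · -- `e` is absorbed into `deltaW W`
          have habs : G.deltaW c W ∪ (K ∪ {e}) = G.deltaW c W ∪ K := by
            have heW : e ∈ G.deltaW c W := ⟨heDa.1, a, haW, heDa.2⟩
            ext x
            simp only [Set.mem_union, Set.mem_singleton_iff]
            constructor
            · rintro (h | h | rfl)
              · exact Or.inl h
              · exact Or.inr h
              · exact Or.inl heW
            · rintro (h | h)
              · exact Or.inl h
              · exact Or.inr (Or.inl h)
          have hsumW : ∑ b ∈ W, d' b + 1 = ∑ b ∈ W, d b := by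
            have h1 : ∑ b ∈ W, d' b = (d a - 1) + ∑ b ∈ W \ {a}, d b :=
              Finset.sum_update_of_mem haW d (d a - 1)
            have h2 : d a + ∑ b ∈ W.erase a, d b = ∑ b ∈ W, d b :=
              Finset.add_sum_erase _ _ haW
            rw [Finset.erase_eq] at h2
            omega
          have hHW := hH W (fun b hb => by
            by_cases hba : b = a
            · rw [hba]; exact hda
            · rw [← hd'ne b hba]; exact hsupp b hb) hWne
          rw [habs, hKecard]
          omega
        · -- `a ∉ W` : use that `W` is not a danger set for `e`
          have hsuppd : ∀ b ∈ W, 0 < d b := by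
            intro b hb
            have hba : b ≠ a := fun h => haW (h ▸ hb)
            rw [← hd'ne b hba]; exact hsupp b hb
          have hsumW : ∑ b ∈ W, d' b = ∑ b ∈ W, d b :=
            Finset.sum_congr rfl (fun b hb => hd'ne b (fun h => haW (h ▸ hb)))
          have hHW := hH W hsuppd hWne
          have hassoc : G.deltaW c W ∪ (K ∪ {e}) = (G.deltaW c W ∪ K) ∪ {e} := by
            rw [Set.union_assoc]
          rcases (not_and_or.mp
            (fun hc : TT W ∧ G.Spanned (G.deltaW c W ∪ K) e => hnd ⟨W, hc⟩)) with hnt | hnsp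
          · -- W not TT: since a ∉ W and supp holds, W is not tight
            have hnt' : ¬ Tight W := by
              intro ht; exact hnt ⟨ht, haW, hsuppd⟩
            have hlt : G.comps (G.deltaW c W ∪ K) + K.ncard + (∑ b ∈ W, d b) < n := by
              rcases Nat.lt_or_ge (G.comps (G.deltaW c W ∪ K) + K.ncard + (∑ b ∈ W, d b)) n with h | h
              · exact h
              · exact absurd (le_antisymm hHW h) hnt'
            have hmono := comps_le_comps (G := G)
              (Set.subset_union_left : G.deltaW c W ∪ K ⊆ (G.deltaW c W ∪ K) ∪ {e})
            rw [hassoc, hKecard]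
            omega
          · have hdec := comps_union_not_spanned (G := G) hnsp
            rw [hassoc, hKecard]
            omega
      obtain ⟨F, hKF, hFOm, hFind, hdeg⟩ := ih d' (K ∪ {e}) hsum' hKe hKeOm hH'
      refine ⟨F, Set.subset_union_left.trans hKF, hFOm, hFind, fun v => ?_⟩
      by_cases hva : v = a
      · subst hva
        have hsub : {x ∈ F \ (K ∪ {e}) | v ∈ G.inc x} ⊆ {x ∈ F \ K | v ∈ G.inc x} := by
          rintro x ⟨⟨hxF, hxK⟩, hxinc⟩
          exact ⟨⟨hxF, fun h => hxK (Or.inl h)⟩, hxinc⟩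
        have hemem : e ∈ {x ∈ F \ K | v ∈ G.inc x} :=
          ⟨⟨hKF (Set.mem_union_right _ rfl), heK⟩, heDa.2⟩
        have henot : e ∉ {x ∈ F \ (K ∪ {e}) | v ∈ G.inc x} := by
          rintro ⟨⟨-, hxK⟩, -⟩
          exact hxK (Set.mem_union_right _ rfl)
        have hins : insert e {x ∈ F \ (K ∪ {e}) | v ∈ G.inc x} ⊆ {x ∈ F \ K | v ∈ G.inc x} := by
          rintro x hx
          rcases Set.mem_insert_iff.mp hx with rfl | hx
          · exact hemem
          · exact hsub hx
        have hcard1 : (insert e {x ∈ F \ (K ∪ {e}) | v ∈ G.inc x}).ncard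
            = {x ∈ F \ (K ∪ {e}) | v ∈ G.inc x}.ncard + 1 :=
          Set.ncard_insert_of_notMem henot (Set.toFinite _)
        have hcard2 := Set.ncard_le_ncard hins (Set.toFinite _)
        have := hdeg v
        rw [hd'a] at this
        omega
      · have hsub : {x ∈ F \ (K ∪ {e}) | v ∈ G.inc x} ⊆ {x ∈ F \ K | v ∈ G.inc x} := by
          rintro x ⟨⟨hxF, hxK⟩, hxinc⟩
          exact ⟨⟨hxF, fun h => hxK (Or.inl h)⟩, hxinc⟩
        have hcard := Set.ncard_le_ncard hsub (Set.toFinite _)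
        have := hdeg v
        rw [hd'ne v hva] at this
        omega
    · -- all edges at `a` are dangerous : contradiction with the Hall condition
      exfalso
      push_neg at hgood
      choose Wd hWd using hgood
      have htt_union : ∀ W₁ W₂ : Finset V, TT W₁ → TT W₂ → TT (W₁ ∪ W₂) := by
        intro W₁ W₂ ⟨ht₁, ha₁, hs₁⟩ ⟨ht₂, ha₂, hs₂⟩
        refine ⟨?_, fun h => (Finset.mem_union.mp h).elim ha₁ ha₂,
          fun b hb => (Finset.mem_union.mp hb).elim (hs₁ b) (hs₂ b)⟩
        rcases Finset.eq_empty_or_nonempty W₁ with rfl | hW₁ne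
        · simpa using ht₂
        rcases Finset.eq_empty_or_nonempty W₂ with rfl | hW₂ne
        · simpa using ht₁
        have hsup := comps_supermod (G := G) (G.deltaW c W₂ ∪ K)
          (G.deltaW c W₁ ∪ K) (G.deltaW c (W₁ ∩ W₂) ∪ K)
          (Set.union_subset_union_left _ (deltaW_mono c Finset.inter_subset_left))
        have hXF : (G.deltaW c W₁ ∪ K) ∪ (G.deltaW c W₂ ∪ K)
            = G.deltaW c (W₁ ∪ W₂) ∪ K := by
          rw [deltaW_union]
          ext x
          simp only [Set.mem_union]
          tauto
        have hZF : (G.deltaW c (W₁ ∩ W₂) ∪ K) ∪ (G.deltaW c W₂ ∪ K)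
            = G.deltaW c W₂ ∪ K := by
          have hsub : G.deltaW c (W₁ ∩ W₂) ⊆ G.deltaW c W₂ :=
            deltaW_mono c Finset.inter_subset_right
          ext x
          simp only [Set.mem_union]
          constructor
          · rintro ((h | h) | h)
            · exact Or.inl (hsub h)
            · exact Or.inr h
            · exact h
          · exact fun h => Or.inr h
        rw [hXF, hZF] at hsup
        have hinter : G.comps (G.deltaW c (W₁ ∩ W₂) ∪ K) + K.ncard
            + (∑ b ∈ W₁ ∩ W₂, d b) ≤ n := by
          rcases Finset.eq_empty_or_nonempty (W₁ ∩ W₂) with hie | hine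
          · rw [hie]
            simp only [deltaW_empty, Set.empty_union, Finset.sum_empty, add_zero]
            have := hK
            unfold Indep at this
            omega
          · exact hH _ (fun b hb => hs₁ b (Finset.mem_inter.mp hb).1) hine
        have hunion : G.comps (G.deltaW c (W₁ ∪ W₂) ∪ K) + K.ncard
            + (∑ b ∈ W₁ ∪ W₂, d b) ≤ n :=
          hH _ (fun b hb => (Finset.mem_union.mp hb).elim (hs₁ b) (hs₂ b))
            (Finset.Nonempty.inl hW₁ne)
        have hsums : (∑ b ∈ W₁ ∪ W₂, d b) + (∑ b ∈ W₁ ∩ W₂, d b)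
            = (∑ b ∈ W₁, d b) + (∑ b ∈ W₂, d b) := Finset.sum_union_inter
        rw [hTight] at ht₁ ht₂ ⊢
        omega
      -- build the union of all danger sets
      set DaF : Finset E := (Set.toFinite Da).toFinset with hDaF
      set Wstar : Finset V := DaF.attach.biUnion
        (fun x => Wd x.1 ((Set.Finite.mem_toFinset _).mp x.2)) with hWstar
      have hTTstar : TT Wstar := by
        rw [hWstar]
        have : ∀ s : Finset {x // x ∈ DaF}, TT (s.biUnion
            (fun x => Wd x.1 ((Set.Finite.mem_toFinset _).mp x.2))) := by
          intro s
          induction s using Finset.induction_on with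
          | empty =>
            simp only [Finset.biUnion_empty]
            exact ⟨htight_empty, Finset.notMem_empty a,
              fun b hb => absurd hb (Finset.notMem_empty b)⟩
          | insert x s' hx ih' =>
            rw [Finset.biUnion_insert]
            exact htt_union _ _ ((hWd x.1 ((Set.Finite.mem_toFinset _).mp x.2)).1) ih'
        exact this _
      have hWsub : ∀ (e : E) (he : e ∈ Da), Wd e he ⊆ Wstar := by
        intro e he
        rw [hWstar]
        intro b hb
        have hemem : ⟨e, (Set.Finite.mem_toFinset _).mpr he⟩ ∈ DaF.attach :=
          Finset.mem_attach _ _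
        exact Finset.mem_biUnion.mpr ⟨⟨e, (Set.Finite.mem_toFinset _).mpr he⟩, hemem, hb⟩
      -- absorption of Da into deltaW Wstar ∪ K
      have habsorb : ∀ X : Set E, X ⊆ Da →
          G.comps ((G.deltaW c Wstar ∪ K) ∪ X) = G.comps (G.deltaW c Wstar ∪ K) := by
        intro X
        refine Set.Finite.induction_on X (Set.toFinite X) ?_ ?_
        · intro _; rw [Set.union_empty]
        · intro e X' hx hfin ihX hsub
          have heDa : e ∈ Da := hsub (Set.mem_insert _ _)
          have hX'Da : X' ⊆ Da := fun y hy => hsub (Set.mem_insert_of_mem _ hy)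
          have hsp : G.Spanned ((G.deltaW c Wstar ∪ K) ∪ X') e := by
            have h1 := (hWd e heDa).2
            exact spanned_mono
              (Set.subset_union_left.trans' (Set.union_subset_union_left _
                (deltaW_mono c (hWsub e heDa)))) h1
          have : (G.deltaW c Wstar ∪ K) ∪ insert e X' = ((G.deltaW c Wstar ∪ K) ∪ X') ∪ {e} := by
            ext x
            simp only [Set.mem_union, Set.mem_insert_iff, Set.mem_singleton_iff]
            tauto
          rw [this, comps_union_spanned hsp, ihX hX'Da]
      -- final contradiction via the Hall condition at `insert a Wstar`
      have hstar_a : a ∉ Wstar := hTTstar.2.1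
      have hHfin := hH (insert a Wstar)
        (fun b hb => by
          rcases Finset.mem_insert.mp hb with rfl | hb
          · exact hda
          · exact hTTstar.2.2 b hb)
        (Finset.insert_nonempty _ _)
      have hdins : G.deltaW c (insert a Wstar) = G.deltaW c Wstar ∪ Da := by
        have : insert a Wstar = Wstar ∪ {a} := by
          ext b
          simp only [Finset.mem_insert, Finset.mem_union, Finset.mem_singleton]
          tauto
        rw [this, deltaW_union, hdelta_a, Set.union_comm]
      have hcompseq : G.comps (G.deltaW c (insert a Wstar) ∪ K)
          = G.comps (G.deltaW c Wstar ∪ K) := by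
        rw [hdins]
        have : G.deltaW c Wstar ∪ Da ∪ K = (G.deltaW c Wstar ∪ K) ∪ Da := by
          ext x
          simp only [Set.mem_union]
          tauto
        rw [this, habsorb Da (subset_refl Da)]
      have hsumins : ∑ b ∈ insert a Wstar, d b = d a + ∑ b ∈ Wstar, d b :=
        Finset.sum_insert hstar_a
      have htstar : Tight Wstar := hTTstar.1
      rw [hTight] at htstar
      rw [hcompseq, hsumins] at hHfin
      omega

end Rado

section Counting
variable [Fintype V] [Fintype E]

lemma ne_of_inc {e : E} {u v : V} (h : G.inc e = s(u,v)) : u ≠ v := by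
  intro huv
  exact G.loopless e (by rw [h, huv]; exact Sym2.mk_isDiag_iff.mpr rfl)

lemma left_mem_inc {e : E} {u v : V} (h : G.inc e = s(u,v)) : u ∈ G.inc e := by
  rw [h]; exact Sym2.mem_mk_left u v

lemma right_mem_inc {e : E} {u v : V} (h : G.inc e = s(u,v)) : v ∈ G.inc e := by
  rw [h]; exact Sym2.mem_mk_right u v

lemma other_endpoint {e : E} {a : V} (ha : a ∈ G.inc e) :
    ∃ z : V, z ≠ a ∧ G.inc e = s(a, z) := by
  obtain ⟨u, v, huv, hinc⟩ := exists_endpoints G e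
  rcases (mem_inc_iff hinc).mp ha with rfl | rfl
  · exact ⟨v, fun h => huv h.symm, hinc⟩
  · exact ⟨u, huv, by rw [hinc, Sym2.eq_swap]⟩

lemma inc_eq_of_mem_of_mem {e : E} {x y : V} (hxy : x ≠ y) (hx : x ∈ G.inc e)
    (hy : y ∈ G.inc e) : G.inc e = s(x,y) := by
  obtain ⟨u, v, huv, hinc⟩ := exists_endpoints G e
  rcases (mem_inc_iff hinc).mp hx with rfl | rfl
  · rcases (mem_inc_iff hinc).mp hy with rfl | rfl
    · exact absurd rfl hxy
    · exact hinc
  · rcases (mem_inc_iff hinc).mp hy with rfl | rfl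
    · rw [hinc, Sym2.eq_swap]
    · exact absurd rfl hxy

lemma degree_le_maxDegree (v : V) : G.degree v ≤ G.maxDegree :=
  Finset.le_sup (Finset.mem_univ v)

lemma degOn_mono {S T : Set E} (h : S ⊆ T) (v : V) : G.degOn S v ≤ G.degOn T v :=
  Set.ncard_le_ncard (fun e he => ⟨h he.1, he.2⟩) (Set.toFinite _)

lemma degree_set (v : V) : G.degree v = {e : E | v ∈ G.inc e}.ncard := by
  unfold degree degOn
  congr 1
  ext e
  simp

lemma degree_pos_of_mem {e : E} {v : V} (hv : v ∈ G.inc e) : 0 < G.degree v := by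
  rw [degree_set]
  exact (Set.ncard_pos (Set.toFinite _)).mpr ⟨e, hv⟩

/-- vertices of the true colour class have all incident edges bichromatic -/
lemma mem_Om_of_true {c : V → Bool}
    (hind : ∀ e : E, ∀ u v : V, G.inc e = s(u,v) → ¬(c u = true ∧ c v = true))
    {a : V} (ha : c a = true) {e : E} (hae : a ∈ G.inc e) : e ∈ G.Om c := by
  obtain ⟨z, hz, hinc⟩ := other_endpoint hae
  have hcz : c z ≠ true := fun h => hind e a z hinc ⟨ha, h⟩
  exact mem_Om_of_ends hinc (by rw [ha]; exact fun h => hcz h.symm)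

/-- **the Hall-type rank condition** for the set of true vertices of maximum degree -/
lemma rank_condition (hconn : G.Connected)
    (hG : ¬ (G.IsRegular ∧ G.IsBipartite)) {c : V → Bool}
    (hind : ∀ e : E, ∀ u v : V, G.inc e = s(u,v) → ¬(c u = true ∧ c v = true))
    (hΔpos : 0 < G.maxDegree)
    (W : Finset V) (hWA : ∀ a ∈ W, c a = true ∧ G.degree a = G.maxDegree)
    (hWne : W.Nonempty) :
    G.comps (G.deltaW c W) + 2 * W.card ≤ Nat.card V := by
  classical
  by_contra hfail
  push_neg at hfail
  set n := Nat.card V with hn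
  set Δ := G.maxDegree with hΔ
  set S₀ := G.deltaW c W with hS₀
  set cl₀ := G.cl S₀ with hcl₀
  -- edges incident to a member of `W` are exactly all edges at that member
  have hWedge : ∀ a ∈ W, ∀ e : E, a ∈ G.inc e → e ∈ S₀ := by
    intro a haW e hae
    exact ⟨mem_Om_of_true hind (hWA a haW).1 hae, a, haW, hae⟩
  set Touch : Set V := {v | ∃ e ∈ S₀, v ∈ G.inc e} with hTouch
  have hWT : ↑W ⊆ Touch := by
    intro a haW
    have hdeg : 0 < G.degree a := by
      rw [(hWA a haW).2]; exact hΔpos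
    rw [degree_set] at hdeg
    obtain ⟨e, he⟩ := (Set.ncard_pos (Set.toFinite _)).mp hdeg
    exact ⟨e, hWedge a haW e he, he⟩
  set N : Set V := Touch \ ↑W with hN
  -- touched vertices outside W are false
  have hN_false : ∀ z ∈ N, c z = false := by
    rintro z ⟨⟨e, heS, hze⟩, hzW⟩
    obtain ⟨-, a, haW, hae⟩ := heS
    have hza : z ≠ a := fun h => hzW (by rw [h]; exact haW)
    have hinc := inc_eq_of_mem_of_mem hza hze hae
    have := hind e z a hinc
    cases hcz : c z
    · rfl
    · exact absurd ⟨hcz, (hWA a haW).1⟩ this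
  -- untouched vertices are singletons
  have hsingle : ∀ z : V, z ∉ Touch → cl₀ z = {z} := by
    intro z hz
    ext u
    simp only [Set.mem_singleton_iff]
    constructor
    · intro h
      have : ∀ y : V, G.ReachOn S₀ z y → z = y := by
        intro y hy
        induction hy with
        | refl => rfl
        | @tail p q hzp hadj ihy =>
          obtain ⟨e, he, hinc⟩ := hadj
          have hzp' : z = p := ihy
          exact absurd ⟨e, he, by rw [hzp']; exact left_mem_inc hinc⟩ hz
      exact (this u h).symm
    · rintro rfl; exact mem_cl_self u
  -- counting components
  set RT : Set (Set V) := cl₀ '' Touch with hRT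
  have hrange : Set.range cl₀ = RT ∪ ((fun z : V => ({z} : Set V)) '' (Set.univ \ Touch)) := by
    ext A
    constructor
    · rintro ⟨v, rfl⟩
      by_cases hv : v ∈ Touch
      · exact Or.inl ⟨v, hv, rfl⟩
      · exact Or.inr ⟨v, ⟨trivial, hv⟩, (hsingle v hv).symm⟩
    · rintro (⟨v, -, rfl⟩ | ⟨v, ⟨-, hv⟩, rfl⟩)
      · exact ⟨v, rfl⟩
      · exact ⟨v, hsingle v hv⟩
  have hdisj : Disjoint RT ((fun z : V => ({z} : Set V)) '' (Set.univ \ Touch)) := by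
    rw [Set.disjoint_left]
    rintro A ⟨t, ht, rfl⟩ ⟨z, ⟨-, hz⟩, hAz⟩
    have : t ∈ cl₀ t := mem_cl_self t
    rw [← hAz] at this
    have : t = z := this
    rw [this] at ht
    exact hz ht
  have hcomps_eq : G.comps S₀ = RT.ncard + (Set.univ \ Touch).ncard := by
    unfold comps
    rw [← hcl₀, hrange, Set.ncard_union_eq hdisj (Set.toFinite _) (Set.toFinite _),
      Set.ncard_image_of_injective _ (fun a b hab => Set.singleton_injective hab)]
  have huntouch : (Set.univ \ Touch).ncard + Touch.ncard = n := by
    have := Set.ncard_diff_add_ncard_of_subset (Set.subset_univ Touch) (Set.toFinite _)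
    rw [Set.ncard_univ] at this
    exact this
  have hsplitT : N.ncard + (↑W : Set V).ncard = Touch.ncard := by
    have := Set.ncard_diff_add_ncard_of_subset hWT (Set.toFinite _)
    exact this
  have hWcard : (↑W : Set V).ncard = W.card := Set.ncard_coe_finset W
  -- pigeonhole over classes of touched vertices
  set RTF : Finset (Set V) := (Set.toFinite RT).toFinset with hRTF
  set NF : Finset V := (Set.toFinite N).toFinset with hNF
  have hNFcard : NF.card = N.ncard := (Set.ncard_eq_toFinset_card N (Set.toFinite N)).symm
  have hRTFcard : RTF.card = RT.ncard := (Set.ncard_eq_toFinset_card RT (Set.toFinite RT)).symm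
  have hNmap : ∀ x ∈ NF, cl₀ x ∈ RTF := by
    intro x hx
    have hxN : x ∈ N := (Set.Finite.mem_toFinset _).mp hx
    exact (Set.Finite.mem_toFinset _).mpr ⟨x, hxN.1, rfl⟩
  have hWmap : ∀ a ∈ W, cl₀ a ∈ RTF := by
    intro a ha
    exact (Set.Finite.mem_toFinset _).mpr ⟨a, hWT ha, rfl⟩
  have hNsum : NF.card = ∑ C ∈ RTF, (NF.filter (fun x => cl₀ x = C)).card :=
    Finset.card_eq_sum_card_fiberwise hNmap
  have hWsum : W.card = ∑ C ∈ RTF, (W.filter (fun a => cl₀ a = C)).card :=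
    Finset.card_eq_sum_card_fiberwise hWmap
  have hpigeon : ∃ C ∈ RTF, (NF.filter (fun x => cl₀ x = C)).card
      ≤ (W.filter (fun a => cl₀ a = C)).card := by
    by_contra hall
    push_neg at hall
    have hsumle : ∑ C ∈ RTF, ((W.filter (fun a => cl₀ a = C)).card + 1)
        ≤ ∑ C ∈ RTF, (NF.filter (fun x => cl₀ x = C)).card :=
      Finset.sum_le_sum (fun C hC => hall C hC)
    rw [Finset.sum_add_distrib, Finset.sum_const, smul_eq_mul, mul_one] at hsumle
    omega
  obtain ⟨C, hCRT, hCle⟩ := hpigeon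
  set WC : Finset V := W.filter (fun a => cl₀ a = C) with hWC
  set NC : Finset V := NF.filter (fun x => cl₀ x = C) with hNC
  -- edge sets at vertices
  set EaF : V → Finset E := fun a => (Set.toFinite {e : E | a ∈ G.inc e}).toFinset with hEaF
  have hEa_card : ∀ a : V, (EaF a).card = G.degree a := by
    intro a
    rw [degree_set]
    exact (Set.ncard_eq_toFinset_card _ (Set.toFinite _)).symm
  have hEa_mem : ∀ a : V, ∀ e : E, e ∈ EaF a ↔ a ∈ G.inc e := by
    intro a e
    rw [hEaF]
    simp [Set.Finite.mem_toFinset]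
  set DCF : Finset E := WC.biUnion EaF with hDCF
  have hWCsub : WC ⊆ W := Finset.filter_subset _ _
  have hWCtrue : ∀ a ∈ WC, c a = true := fun a ha => (hWA a (hWCsub ha)).1
  have hDCF_card : DCF.card = Δ * WC.card := by
    rw [hDCF, Finset.card_biUnion]
    · have : ∀ a ∈ WC, (EaF a).card = Δ := by
        intro a ha
        rw [hEa_card a, (hWA a (hWCsub ha)).2]
      rw [Finset.sum_congr rfl this, Finset.sum_const, smul_eq_mul, mul_comm]
    · intro x hx y hy hxy
      rw [Function.onFun, Finset.disjoint_left]
      intro e hex hey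
      have hinc := inc_eq_of_mem_of_mem hxy ((hEa_mem x e).mp hex) ((hEa_mem y e).mp hey)
      exact hind e x y hinc ⟨hWCtrue x hx, hWCtrue y hy⟩
  -- every DCF edge has its other endpoint in NC
  have hother : ∀ e ∈ DCF, ∃ z ∈ NC, z ∈ G.inc e := by
    intro e he
    obtain ⟨a, haWC, hea⟩ := Finset.mem_biUnion.mp he
    have hae : a ∈ G.inc e := (hEa_mem a e).mp hea
    obtain ⟨z, hza, hinc⟩ := other_endpoint hae
    have heS : e ∈ S₀ := hWedge a (hWCsub haWC) e hae
    have hzT : z ∈ Touch := ⟨e, heS, right_mem_inc hinc⟩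
    have hcz : c z ≠ true := fun h => hind e a z hinc ⟨hWCtrue a haWC, h⟩
    have hzW : z ∉ (↑W : Set V) := fun h => hcz (hWA z h).1
    have hzN : z ∈ N := ⟨hzT, hzW⟩
    have hclz : cl₀ z = C := by
      have hstep : G.ReachOn S₀ a z := adjOn_of_edge heS hinc
      have : cl₀ a = cl₀ z := cl_eq_of_reach hstep
      rw [← this]
      exact (Finset.mem_filter.mp haWC).2
    refine ⟨z, ?_, right_mem_inc hinc⟩
    rw [hNC]
    exact Finset.mem_filter.mpr ⟨(Set.Finite.mem_toFinset _).mpr hzN, hclz⟩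
  have hDCF_sub : DCF ⊆ NC.biUnion (fun z => EaF z ∩ DCF) := by
    intro e he
    obtain ⟨z, hzNC, hze⟩ := hother e he
    exact Finset.mem_biUnion.mpr ⟨z, hzNC, Finset.mem_inter.mpr ⟨(hEa_mem z e).mpr hze, he⟩⟩
  have hcover : DCF.card ≤ ∑ z ∈ NC, (EaF z ∩ DCF).card :=
    le_trans (Finset.card_le_card hDCF_sub) (Finset.card_biUnion_le)
  have hterm_le : ∀ z ∈ NC, (EaF z ∩ DCF).card ≤ Δ := by
    intro z _
    calc (EaF z ∩ DCF).card ≤ (EaF z).card := Finset.card_le_card Finset.inter_subset_left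
    _ = G.degree z := hEa_card z
    _ ≤ Δ := degree_le_maxDegree z
  have hsum_le : ∑ z ∈ NC, (EaF z ∩ DCF).card ≤ Δ * NC.card := by
    calc ∑ z ∈ NC, (EaF z ∩ DCF).card ≤ ∑ z ∈ NC, Δ := Finset.sum_le_sum hterm_le
    _ = Δ * NC.card := by rw [Finset.sum_const, smul_eq_mul, mul_comm]
  -- conclude |NC| = |WC| and each NC vertex has all its edges in DCF
  have hNCWC : NC.card = WC.card := by
    have h1 : Δ * WC.card ≤ Δ * NC.card := by omega
    have h2 : WC.card ≤ NC.card := Nat.le_of_mul_le_mul_left h1 hΔpos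
    omega
  have hNCfull : ∀ z ∈ NC, (EaF z ∩ DCF).card = Δ := by
    by_contra hcon
    push_neg at hcon
    obtain ⟨z₀, hz₀, hz₀ne⟩ := hcon
    have hz₀lt : (EaF z₀ ∩ DCF).card < Δ :=
      lt_of_le_of_ne (hterm_le z₀ hz₀) hz₀ne
    have : ∑ z ∈ NC, (EaF z ∩ DCF).card < ∑ z ∈ NC, Δ :=
      Finset.sum_lt_sum hterm_le ⟨z₀, hz₀, hz₀lt⟩
    rw [Finset.sum_const, smul_eq_mul, mul_comm] at this
    have hmul : Δ * NC.card = Δ * WC.card := by rw [hNCWC]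
    omega
  have hNCdeg : ∀ z ∈ NC, G.degree z = Δ := by
    intro z hz
    have h1 : Δ ≤ G.degree z := by
      rw [← hEa_card z]
      calc Δ = (EaF z ∩ DCF).card := (hNCfull z hz).symm
      _ ≤ (EaF z).card := Finset.card_le_card Finset.inter_subset_left
    exact le_antisymm (degree_le_maxDegree z) h1
  have hNCedges : ∀ z ∈ NC, ∀ e : E, z ∈ G.inc e → e ∈ DCF := by
    intro z hz e hze
    have hsub : EaF z ∩ DCF ⊆ EaF z := Finset.inter_subset_left
    have hcard : (EaF z).card ≤ (EaF z ∩ DCF).card := by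
      rw [hNCfull z hz, hEa_card z, hNCdeg z hz]
    have heq : EaF z ∩ DCF = EaF z := Finset.eq_of_subset_of_card_le hsub hcard
    have : e ∈ EaF z := (hEa_mem z e).mpr hze
    rw [← heq] at this
    exact (Finset.mem_inter.mp this).2
  -- the closed set
  set Closed : Set V := ↑WC ∪ ↑NC with hClosed
  have hclosed_step : ∀ e : E, ∀ u v : V, G.inc e = s(u,v) → u ∈ Closed →
      v ∈ Closed ∧ e ∈ G.Om c := by
    intro e u v hinc hu
    rcases hu with hu | hu
    · -- u ∈ WC
      have huWC : u ∈ WC := hu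
      have hOm : e ∈ G.Om c := mem_Om_of_true hind (hWCtrue u huWC) (left_mem_inc hinc)
      have heDCF : e ∈ DCF :=
        Finset.mem_biUnion.mpr ⟨u, huWC, (hEa_mem u e).mpr (left_mem_inc hinc)⟩
      obtain ⟨z, hzNC, hze⟩ := hother e heDCF
      have hzu : z ≠ u := by
        intro h
        have : c z = false := by
          have hzN' : z ∈ N := (Set.Finite.mem_toFinset _).mp (Finset.mem_filter.mp hzNC).1
          exact hN_false z hzN'
        rw [h, hWCtrue u huWC] at this
        exact Bool.noConfusion this
      have : z = v := by
        rcases (mem_inc_iff hinc).mp hze with h | h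
        · exact absurd h hzu
        · exact h
      rw [← this]
      exact ⟨Or.inr hzNC, hOm⟩
    · -- u ∈ NC
      have huNC : u ∈ NC := hu
      have heDCF : e ∈ DCF := hNCedges u huNC e (left_mem_inc hinc)
      obtain ⟨a, haWC, hea⟩ := Finset.mem_biUnion.mp heDCF
      have hae : a ∈ G.inc e := (hEa_mem a e).mp hea
      have hOm : e ∈ G.Om c := mem_Om_of_true hind (hWCtrue a haWC) hae
      have hau : a ≠ u := by
        intro h
        have huN' : u ∈ N := (Set.Finite.mem_toFinset _).mp (Finset.mem_filter.mp huNC).1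
        have := hN_false u huN'
        rw [← h, hWCtrue a haWC] at this
        exact Bool.noConfusion this
      have hav : a = v := by
        rcases (mem_inc_iff hinc).mp hae with h | h
        · exact absurd h hau
        · exact h
      rw [← hav]
      exact ⟨Or.inl haWC, hOm⟩
  -- Closed is everything
  have hWCne : WC.Nonempty := by
    obtain ⟨t, htT, hCt⟩ := (Set.Finite.mem_toFinset _).mp hCRT
    have htC : t ∈ C := by rw [← hCt]; exact mem_cl_self t
    by_contra hWCe
    rw [Finset.not_nonempty_iff_eq_empty] at hWCe
    have hNCe : NC = ∅ := by
      have := hCle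
      rw [hWCe] at this
      simp only [Finset.card_empty, Nat.le_zero, Finset.card_eq_zero] at this
      exact this
    by_cases htW : t ∈ W
    · have : t ∈ WC := Finset.mem_filter.mpr ⟨htW, hCt⟩
      rw [hWCe] at this
      exact absurd this (Finset.notMem_empty t)
    · have htN : t ∈ N := ⟨htT, htW⟩
      have : t ∈ NC := Finset.mem_filter.mpr ⟨(Set.Finite.mem_toFinset _).mpr htN, hCt⟩
      rw [hNCe] at this
      exact absurd this (Finset.notMem_empty t)
  have hCloseduniv : ∀ x : V, x ∈ Closed := by
    intro x
    by_contra hx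
    obtain ⟨a₀, ha₀⟩ := hWCne
    have ha₀C : a₀ ∈ Closed := Or.inl ha₀
    obtain ⟨e, -, p, q, hinc, hp, hq⟩ := exists_crossing ha₀C hx (hconn.2 a₀ x)
    exact hq (hclosed_step e p q hinc hp).1
  -- regular and bipartite: contradiction
  refine hG ⟨⟨Δ, ?_⟩, ⟨c, ?_⟩⟩
  · intro v
    rcases hCloseduniv v with hv | hv
    · exact (hWA v (hWCsub hv)).2
    · exact hNCdeg v hv
  · intro e _ u v hinc
    have hOm : e ∈ G.Om c := (hclosed_step e u v hinc (hCloseduniv u)).2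
    exact hOm u v hinc

end Counting

section Main
variable [Fintype V] [Fintype E]

lemma maxDegree_pos (hconn : G.Connected) (hone : ∃ v : V, v ≠ w) : 0 < G.maxDegree := by
  obtain ⟨v, hv⟩ := hone
  obtain ⟨e, -, a, b, hinc, ha, hb⟩ :=
    exists_crossing (Set.mem_singleton w) (fun h => hv h) (hconn.2 w v)
  have : 0 < G.degree a := degree_pos_of_mem (left_mem_inc hinc)
  exact lt_of_lt_of_le this (degree_le_maxDegree a)

end Main
end Multigraph


/-- Every connected multigraph `G` that is not a regular
bipartite graph has, for every vertex `w` and every `lam ∈ {0,1}` (here `false`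
encodes type 0 and `true` encodes type 1), a spanning weakly even
`(w, lam)`-tree: a spanning tree `T` (with edge set `S`) such that in the
bipartition `c` of `T` in which `w` has type `lam`, every leaf of `T` whose
degree in `G` equals `Δ(G)` has type 0. -/
theorem spanning_weakly_even_tree {V E : Type} [Fintype V] [Fintype E]
    (G : Multigraph V E) (hconn : G.Connected)
    (hG : ¬ (G.IsRegular ∧ G.IsBipartite)) (w : V) (lam : Bool) :
    ∃ (S : Set E) (c : V → Bool),
      G.IsTree Set.univ S ∧
      G.ProperOn S c ∧
      c w = lam ∧
      ∀ v : V, G.IsLeaf S v → G.degree v = G.maxDegree → c v = false := by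
  classical
  open Multigraph in
  by_cases hone : ∃ v : V, v ≠ w
  · obtain ⟨c, hcw, hind, hreachOm⟩ := exists_good_coloring hconn w lam hone
    have hΔpos : 0 < G.maxDegree := maxDegree_pos hconn hone
    set d0 : V → ℕ := fun v => if (c v = true ∧ G.degree v = G.maxDegree) then 2 else 0
      with hd0
    have hH : ∀ W : Finset V, (∀ b ∈ W, 0 < d0 b) → W.Nonempty →
        G.comps (G.deltaW c W ∪ ∅) + (∅ : Set E).ncard + (∑ b ∈ W, d0 b) ≤ Nat.card V := by
      intro W hsupp hWne'
      have hWA : ∀ a ∈ W, c a = true ∧ G.degree a = G.maxDegree := by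
        intro a ha
        have h2 := hsupp a ha
        by_cases h : (c a = true ∧ G.degree a = G.maxDegree)
        · exact h
        · rw [hd0] at h2
          simp only [if_neg h] at h2
          omega
      have hsum2 : ∑ b ∈ W, d0 b = 2 * W.card := by
        have : ∀ b ∈ W, d0 b = 2 := by
          intro b hb
          rw [hd0]
          simp only [if_pos (hWA b hb)]
        rw [Finset.sum_congr rfl this, Finset.sum_const, smul_eq_mul, mul_comm]
      rw [Set.union_empty, Set.ncard_empty, hsum2]
      have := rank_condition hconn hG hind hΔpos W hWA hWne'
      omega
    obtain ⟨F, -, hFOm, hFind, hdeg⟩ :=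
      rado (G := G) c (∑ v, d0 v) d0 ∅ rfl indep_empty (Set.empty_subset _) hH
    have hOmconn : ∀ u v : V, G.ReachOn (G.Om c) u v := fun u v =>
      reachOn_trans (hreachOm u) (reachOn_symm (hreachOm v))
    have hVne : Nonempty V := hconn.1
    obtain ⟨T, hFT, hTOm, hTind, hTtot⟩ :=
      exists_spanning_extension hOmconn (G.comps F) F (le_refl _) hFOm hFind
    refine ⟨T, c, ?_, ?_, hcw, ?_⟩
    · refine ⟨⟨w, trivial⟩, fun e _ v _ => trivial, fun u _ v _ => hTtot u v, ?_⟩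
      have h1 := hTind
      have h2 : G.comps T = 1 := comps_spanning hTtot
      unfold Multigraph.Indep at h1
      rw [Set.ncard_univ]
      omega
    · intro e heT u v hinc
      exact hTOm heT u v hinc
    · intro v hleaf hdegv
      by_contra hcv
      have hcvt : c v = true := by
        cases h : c v
        · exact absurd h hcv
        · rfl
      have hd0v : d0 v = 2 := by rw [hd0]; simp only [if_pos (And.intro hcvt hdegv)]
      have hdv := hdeg v
      rw [hd0v] at hdv
      have hsub : {e ∈ F \ (∅ : Set E) | v ∈ G.inc e} ⊆ {e ∈ T | v ∈ G.inc e} := by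
        rintro e ⟨⟨heF, -⟩, hinc⟩
        exact ⟨hFT heF, hinc⟩
      have hle : {e ∈ F \ (∅ : Set E) | v ∈ G.inc e}.ncard ≤ G.degOn T v :=
        Set.ncard_le_ncard hsub (Set.toFinite _)
      have hlf : G.degOn T v = 1 := hleaf
      omega
  · push_neg at hone
    refine absurd ⟨⟨G.degree w, fun v => by rw [hone v]⟩, ⟨fun _ => false, ?_⟩⟩ hG
    intro e _ u v hinc
    exact absurd (by rw [hone u, hone v] : u = v) (Multigraph.ne_of_inc hinc)
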